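/- For every γ with 0 ≤ γ < 1 and every r with (1+γ)/(3+γ) < r < 1, there exists a function f ∈ B(Ω_γ) with Taylor expansion f(z) = Σ_{n≥0} a_n z^n on 𝔻 such that Σ_{n≥0} |a_n| r^n + (1/(1+|a_0|) + r/(1-r)) · Σ_{n≥1} |a_n|² r^{2n} > 1. In other words, the radius (1+γ)/(3+γ) in this refined Bohr inequality cannot be improved. -/

import Mathlib

open Complex

private lemma aux_bound (a : ℝ) (ha0 : 0 < a) (ha1 : a < 1) (w : ℂ) (hwz : ‖w‖ < 1) :
    ‖((a:ℂ) - w) / (1 - (a:ℂ) * w)‖ ≤ 1 := by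
  have hd0 : (0:ℝ) < ‖1 - (a : ℂ) * w‖ := by
    rw [norm_pos_iff]
    intro h0
    have h1 : (a : ℂ) * w = 1 := by linear_combination -h0
    have h2 : ‖(a : ℂ) * w‖ = 1 := by rw [h1]; simp
    rw [norm_mul, Complex.norm_real, Real.norm_eq_abs, abs_of_pos ha0] at h2
    nlinarith [norm_nonneg w]
  rw [norm_div, div_le_one hd0]
  have hwn : w.re ^ 2 + w.im ^ 2 < 1 := by
    have h2 : Complex.normSq w < 1 := by
      rw [← Complex.sq_norm]; nlinarith [norm_nonneg w]
    rw [Complex.normSq_apply] at h2; nlinarith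
  have hsq : (‖(a : ℂ) - w‖) ^ 2 ≤ (‖1 - (a : ℂ) * w‖) ^ 2 := by
    rw [Complex.sq_norm, Complex.sq_norm, Complex.normSq_apply, Complex.normSq_apply]
    simp only [Complex.sub_re, Complex.sub_im, Complex.mul_re, Complex.mul_im,
      Complex.ofReal_re, Complex.ofReal_im, Complex.one_re, Complex.one_im]
    nlinarith [mul_nonneg (by nlinarith : (0:ℝ) ≤ 1 - a ^ 2)
      (by nlinarith : (0:ℝ) ≤ 1 - w.re ^ 2 - w.im ^ 2)]
  nlinarith [norm_nonneg ((a : ℂ) - w),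
    norm_nonneg (1 - (a : ℂ) * w)]

private lemma aux_hasSum (a0 cB q : ℝ) (z : ℂ) (hqz : ‖(q:ℂ) * z‖ < 1) :
    HasSum (fun n => ((if n = 0 then a0 else a0 * q ^ n - cB * q ^ (n - 1) : ℝ) : ℂ) * z ^ n)
      ((((a0:ℝ):ℂ) - ((cB:ℝ):ℂ) * z) * (1 - (q:ℂ) * z)⁻¹) := by
  have hS := hasSum_geometric_of_norm_lt_one hqz
  have S1 := hS.mul_left ((a0 : ℝ) : ℂ)
  have S2 := hS.mul_left (((cB : ℝ) : ℂ) * z)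
  obtain ⟨g, hg⟩ : ∃ x : ℕ → ℂ,
      x = fun n => if n = 0 then 0 else ((cB : ℝ) : ℂ) * z * ((q : ℂ) * z) ^ (n - 1) := ⟨_, rfl⟩
  have hg1 : HasSum g (((cB : ℝ) : ℂ) * z * (1 - (q : ℂ) * z)⁻¹) := by
    have h2 : HasSum (fun n => g (n + 1)) (((cB : ℝ) : ℂ) * z * (1 - (q : ℂ) * z)⁻¹) := by
      have he : (fun n => g (n + 1)) = fun n => ((cB : ℝ) : ℂ) * z * ((q : ℂ) * z) ^ n := by
        funext n; rw [hg]; simp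
      rw [he]; exact S2
    have h3 := (hasSum_nat_add_iff 1).mp h2
    simpa [hg] using h3
  have hsub := S1.sub hg1
  have hfun : (fun n => ((if n = 0 then a0 else a0 * q ^ n - cB * q ^ (n - 1) : ℝ) : ℂ) * z ^ n)
      = fun n => ((a0 : ℝ) : ℂ) * ((q : ℂ) * z) ^ n - g n := by
    funext n
    cases n with
    | zero => simp [hg]
    | succ m =>
      rw [hg]
      simp only [Nat.succ_ne_zero, if_neg, Nat.add_sub_cancel, reduceCtorEq]
      push_cast
      ring
  rw [hfun]
  rw [sub_mul]
  exact hsub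

private lemma aux_core (γ r D δ a A B c q a0 K : ℝ)
    (hγ₀ : 0 ≤ γ) (hγ₁ : γ < 1) (hr0 : 0 < r) (hr₁ : r < 1)
    (hD : D = r * (3 + γ) - (1 + γ)) (hD0 : 0 < D)
    (hδ : δ = (1 - γ) * D / 10) (hδ0 : 0 < δ)
    (ha : a = 1 - δ) (ha0 : 0 < a) (ha1 : a < 1)
    (hA : A = a - γ) (hB : B = 1 - a * γ) (hc : c = 1 - γ)
    (hq : q = a * c / B) (ha0' : a0 = A / B) (hK : K = (1 - a ^ 2) * c / B ^ 2)
    (hB0 : 0 < B) (hacB : a * c < B) (hc0 : 0 < c) (hqr1 : q * r < 1) :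
    1 < a0 + K * r * (1 - q * r)⁻¹ := by
  have hacr : a * c * r < B := by nlinarith
  have hBacr : 0 < B - a * c * r := by linarith
  have h1 : a0 + K * r * (1 - q * r)⁻¹
      = (A * (B - a * c * r) + (1 - a ^ 2) * c * r) / (B * (B - a * c * r)) := by
    rw [ha0', hK, hq]
    rw [show 1 - a * c / B * r = (B - a * c * r) / B by field_simp]
    field_simp
  rw [h1, lt_div_iff₀ (by positivity)]
  have hkey : (B - A) * (B - a * c * r) < (1 - a ^ 2) * c * r := by
    have hBA : B - A = (1 - a) * (1 + γ) := by rw [hA, hB]; ring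
    rw [hBA]
    have h1a : 1 - a = δ := by rw [ha]; ring
    rw [h1a]
    have hs : (1 - γ) * r + (1 + γ) * (1 - γ) * r + γ * (1 + γ) < 10 := by nlinarith
    rw [hB, hc, ha] at *
    nlinarith [mul_pos hδ0 (by linarith :
      (0:ℝ) < 10 - ((1 - γ) * r + (1 + γ) * (1 - γ) * r + γ * (1 + γ)))]
  nlinarith

set_option maxHeartbeats 1000000 in
/-- **Sharpness in Theorem 2.** For `0 ≤ γ < 1` and any `r` with `(1+γ)/(3+γ) < r < 1`,
there is `f ∈ B(Ω_γ)` with expansion `Σ a_n z^n` on `𝔻` such that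
`Σ |a_n| r^n + (1/(1+|a_0|) + r/(1-r)) · Σ_{n≥1} |a_n|² r^{2n} > 1`;
hence the radius `(1+γ)/(3+γ)` cannot be improved. -/
theorem bohr_refined_omega_gamma_sharp (γ : ℝ) (hγ₀ : 0 ≤ γ) (hγ₁ : γ < 1)
    (r : ℝ) (hr₀ : (1 + γ) / (3 + γ) < r) (hr₁ : r < 1) :
    ∃ (f : ℂ → ℂ) (a : ℕ → ℂ),
      DifferentiableOn ℂ f (Metric.ball (-(γ / (1 - γ)) : ℂ) (1 / (1 - γ))) ∧
      (∀ z ∈ Metric.ball (-(γ / (1 - γ)) : ℂ) (1 / (1 - γ)), ‖f z‖ ≤ 1) ∧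
      (∀ z ∈ Metric.ball (0 : ℂ) 1, HasSum (fun n => a n * z ^ n) (f z)) ∧
      1 < (∑' n : ℕ, ‖a n‖ * r ^ n)
        + (1 / (1 + ‖a 0‖) + r / (1 - r))
          * (∑' n : ℕ, ‖a (n + 1)‖ ^ 2 * r ^ (2 * (n + 1))) := by
  have hγ' : (0:ℝ) < 1 - γ := by linarith
  have h3γ : (0:ℝ) < 3 + γ := by linarith
  have hr0 : 0 < r := lt_trans (by positivity) hr₀
  have hD0 : 0 < r * (3 + γ) - (1 + γ) := by
    have := (div_lt_iff₀ h3γ).mp hr₀; linarith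
  obtain ⟨D, hD⟩ : ∃ x : ℝ, x = r * (3 + γ) - (1 + γ) := ⟨_, rfl⟩
  rw [← hD] at hD0
  have hD2 : D < 2 := by rw [hD]; nlinarith
  obtain ⟨δ, hδ⟩ : ∃ x : ℝ, x = (1 - γ) * D / 10 := ⟨_, rfl⟩
  have hδ0 : 0 < δ := by rw [hδ]; positivity
  have hδlt : δ < 1 - γ := by rw [hδ]; nlinarith
  obtain ⟨a, ha⟩ : ∃ x : ℝ, x = 1 - δ := ⟨_, rfl⟩
  have ha1 : a < 1 := by rw [ha]; linarith
  have haγ : γ < a := by rw [ha]; linarith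
  have ha0 : 0 < a := lt_of_le_of_lt hγ₀ haγ
  obtain ⟨A, hA⟩ : ∃ x : ℝ, x = a - γ := ⟨_, rfl⟩
  obtain ⟨B, hB⟩ : ∃ x : ℝ, x = 1 - a * γ := ⟨_, rfl⟩
  obtain ⟨c, hc⟩ : ∃ x : ℝ, x = 1 - γ := ⟨_, rfl⟩
  have hA0 : 0 < A := by rw [hA]; linarith
  have hB0 : 0 < B := by rw [hB]; nlinarith
  have hc0 : 0 < c := by rw [hc]; linarith
  have hacB : a * c < B := by rw [hB, hc]; nlinarith
  have hAB : A < B := by rw [hA, hB]; nlinarith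
  obtain ⟨q, hq⟩ : ∃ x : ℝ, x = a * c / B := ⟨_, rfl⟩
  have hq0 : 0 < q := by rw [hq]; positivity
  have hq1 : q < 1 := by rw [hq]; exact (div_lt_one hB0).mpr hacB
  obtain ⟨a0, ha0'⟩ : ∃ x : ℝ, x = A / B := ⟨_, rfl⟩
  have ha00 : 0 < a0 := by rw [ha0']; positivity
  obtain ⟨K, hK⟩ : ∃ x : ℝ, x = (1 - a ^ 2) * c / B ^ 2 := ⟨_, rfl⟩
  have hK0 : 0 < K := by
    have h1 : 0 < 1 - a ^ 2 := by nlinarith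
    rw [hK]; positivity
  obtain ⟨car, hcar⟩ : ∃ x : ℕ → ℝ, x = fun n => if n = 0 then a0 else -(K * q ^ (n - 1)) :=
    ⟨_, rfl⟩
  -- membership in Ω_γ ball gives |γ + c z| < 1
  have hw : ∀ z ∈ Metric.ball (-(γ / (1 - γ)) : ℂ) (1 / (1 - γ)),
      ‖(γ : ℂ) + (c : ℂ) * z‖ < 1 := by
    intro z hz
    rw [Metric.mem_ball, dist_eq] at hz
    have h1 : (γ : ℂ) + (c : ℂ) * z = (c : ℂ) * (z - (-(γ / (1 - γ)) : ℂ)) := by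
      have hcC : ((c : ℝ) : ℂ) = 1 - (γ : ℂ) := by rw [hc]; push_cast; ring
      have hne : (1 : ℂ) - (γ : ℂ) ≠ 0 := by
        intro h0
        have : (γ : ℂ) = 1 := by linear_combination -h0
        have : γ = 1 := by exact_mod_cast this
        linarith
      rw [hcC]
      field_simp
      ring
    rw [h1, norm_mul]
    have hcabs : ‖(c : ℂ)‖ = c := by
      rw [Complex.norm_real, Real.norm_eq_abs, abs_of_pos hc0]
    rw [hcabs]
    calc c * ‖z - (-(γ / (1 - γ)) : ℂ)‖ < c * (1 / (1 - γ)) := by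
          exact mul_lt_mul_of_pos_left hz hc0
      _ = 1 := by rw [hc]; field_simp
  -- denominator nonzero on Ω_γ ball
  have hden : ∀ z ∈ Metric.ball (-(γ / (1 - γ)) : ℂ) (1 / (1 - γ)),
      ((B : ℂ) - (a : ℂ) * (c : ℂ) * z) ≠ 0 := by
    intro z hz
    have hwz := hw z hz
    have heq : ((B : ℂ) - (a : ℂ) * (c : ℂ) * z) = 1 - (a : ℂ) * ((γ : ℂ) + (c : ℂ) * z) := by
      rw [hB]; push_cast; ring
    rw [heq]
    intro h0
    have h1 : ‖(a : ℂ) * ((γ : ℂ) + (c : ℂ) * z)‖ = 1 := by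
      have : (a : ℂ) * ((γ : ℂ) + (c : ℂ) * z) = 1 := by linear_combination -h0
      rw [this]; simp
    rw [norm_mul, Complex.norm_real, Real.norm_eq_abs, abs_of_pos ha0] at h1
    nlinarith [hwz, norm_nonneg ((γ : ℂ) + (c : ℂ) * z)]
  refine ⟨fun z => ((A : ℂ) - (c : ℂ) * z) / ((B : ℂ) - (a : ℂ) * (c : ℂ) * z),
    fun n => ((car n : ℝ) : ℂ), ?_, ?_, ?_, ?_⟩
  · -- differentiability
    exact DifferentiableOn.div
      (Differentiable.differentiableOn (by fun_prop))
      (Differentiable.differentiableOn (by fun_prop))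
      hden
  · -- bounded by 1
    intro z hz
    show ‖((A : ℂ) - (c : ℂ) * z) / ((B : ℂ) - (a : ℂ) * (c : ℂ) * z)‖ ≤ 1
    have hwz := hw z hz
    have hnum : ((A : ℂ) - (c : ℂ) * z) = (a : ℂ) - ((γ : ℂ) + (c : ℂ) * z) := by
      rw [hA]; push_cast; ring
    have hden' : ((B : ℂ) - (a : ℂ) * (c : ℂ) * z)
        = 1 - (a : ℂ) * ((γ : ℂ) + (c : ℂ) * z) := by
      rw [hB]; push_cast; ring
    rw [hnum, hden']
    exact aux_bound a ha0 ha1 _ hwz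
  · -- power series
    intro z hz
    show HasSum (fun n => ((car n : ℝ) : ℂ) * z ^ n)
      (((A : ℂ) - (c : ℂ) * z) / ((B : ℂ) - (a : ℂ) * (c : ℂ) * z))
    rw [Metric.mem_ball, dist_zero_right] at hz
    have hqz : ‖(q : ℂ) * z‖ < 1 := by
      rw [norm_mul, Complex.norm_real, Real.norm_eq_abs, abs_of_pos hq0]
      nlinarith [norm_nonneg z]
    have hBne : B ≠ 0 := ne_of_gt hB0
    have hBA2 : B - a * A = 1 - a ^ 2 := by rw [hA, hB]; ring
    have hKalt : K * B ^ 2 = (1 - a ^ 2) * c := by rw [hK]; field_simp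
    have hKq : -K = a0 * q - c / B := by
      rw [ha0', hq, hK, ← hBA2]
      field_simp
      ring
    have hcoef : car = fun n => if n = 0 then a0 else a0 * q ^ n - (c / B) * q ^ (n - 1) := by
      funext n
      cases n with
      | zero => simp [hcar]
      | succ m =>
        rw [hcar]
        simp only [Nat.succ_ne_zero, if_neg, Nat.add_sub_cancel, reduceCtorEq, if_false]
        have : -(K * q ^ m) = (a0 * q - c / B) * q ^ m := by
          rw [← hKq]; ring
        rw [this, pow_succ]; ring
    rw [hcoef]
    have hS := aux_hasSum a0 (c / B) q z hqz
    convert hS using 1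
    have h1qz : (1 : ℂ) - (q : ℂ) * z ≠ 0 := by
      intro h0
      have h1 : (q : ℂ) * z = 1 := by linear_combination -h0
      have h2 : ‖(q : ℂ) * z‖ = 1 := by rw [h1]; simp
      linarith
    have hBne : ((B : ℝ) : ℂ) ≠ 0 := by exact_mod_cast ne_of_gt hB0
    have hqC : ((q : ℝ) : ℂ) = (a : ℂ) * (c : ℂ) / (B : ℂ) := by
      rw [hq]; push_cast; ring
    have hdenz : ((B : ℂ) - (a : ℂ) * (c : ℂ) * z) = (B : ℂ) * (1 - (q : ℂ) * z) := by
      rw [hqC]; field_simp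
    have ha0C : ((a0 : ℝ) : ℂ) = (A : ℂ) / (B : ℂ) := by rw [ha0']; push_cast; ring
    rw [hdenz, ha0C]
    push_cast
    field_simp
  · -- the inequality
    show 1 < (∑' n : ℕ, ‖((car n : ℝ) : ℂ)‖ * r ^ n)
        + (1 / (1 + ‖((car 0 : ℝ) : ℂ)‖) + r / (1 - r))
          * (∑' n : ℕ, ‖((car (n + 1) : ℝ) : ℂ)‖ ^ 2 * r ^ (2 * (n + 1)))
    have habs : ∀ n, ‖((car n : ℝ) : ℂ)‖ = if n = 0 then a0 else K * q ^ (n - 1) := by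
      intro n
      rw [Complex.norm_real, Real.norm_eq_abs]
      cases n with
      | zero => rw [hcar]; simp [abs_of_pos ha00]
      | succ m =>
        rw [hcar]
        simp only [Nat.succ_ne_zero, if_neg, Nat.add_sub_cancel, reduceCtorEq, if_false, abs_neg]
        exact abs_of_nonneg (by positivity)
    have hqr0 : (0:ℝ) ≤ q * r := by positivity
    have hqr1 : q * r < 1 := by nlinarith [mul_lt_mul_of_pos_left hr₁ hq0]
    have hF : ∀ n : ℕ, ‖((car (n + 1) : ℝ) : ℂ)‖ * r ^ (n + 1)
        = (K * r) * (q * r) ^ n := by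
      intro n
      rw [habs (n + 1)]
      simp only [Nat.succ_ne_zero, if_neg, Nat.add_sub_cancel, reduceCtorEq, if_false]
      rw [mul_pow, pow_succ]
      ring
    have hsummable : Summable (fun n => ‖((car n : ℝ) : ℂ)‖ * r ^ n) := by
      rw [← summable_nat_add_iff 1]
      have he : (fun n => ‖((car (n + 1) : ℝ) : ℂ)‖ * r ^ (n + 1))
          = fun n => (K * r) * (q * r) ^ n := funext hF
      rw [he]
      exact (summable_geometric_of_lt_one hqr0 hqr1).mul_left _
    have hsum1 : (∑' n : ℕ, ‖((car n : ℝ) : ℂ)‖ * r ^ n)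
        = a0 + K * r * (1 - q * r)⁻¹ := by
      rw [Summable.tsum_eq_zero_add hsummable]
      have h0 : ‖((car 0 : ℝ) : ℂ)‖ * r ^ 0 = a0 := by rw [habs 0]; simp
      have h1 : (∑' n : ℕ, ‖((car (n + 1) : ℝ) : ℂ)‖ * r ^ (n + 1))
          = K * r * (1 - q * r)⁻¹ := by
        rw [tsum_congr hF, tsum_mul_left, tsum_geometric_of_lt_one hqr0 hqr1]
      rw [h0, h1]
    have hcoefpos : 0 < 1 / (1 + ‖((car 0 : ℝ) : ℂ)‖) + r / (1 - r) := by
      rw [habs 0]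
      simp only [if_pos rfl, reduceIte]
      have h1 : 0 < 1 / (1 + a0) := by positivity
      have h2 : 0 < r / (1 - r) := by
        apply div_pos hr0; linarith
      linarith
    have h3 : 0 ≤ ∑' n : ℕ, ‖((car (n + 1) : ℝ) : ℂ)‖ ^ 2 * r ^ (2 * (n + 1)) :=
      tsum_nonneg fun n => by positivity
    have hcore : 1 < a0 + K * r * (1 - q * r)⁻¹ :=
      aux_core γ r D δ a A B c q a0 K hγ₀ hγ₁ hr0 hr₁ hD hD0 hδ hδ0 ha ha0 ha1
        hA hB hc hq ha0' hK hB0 hacB hc0 hqr1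
    rw [hsum1]
    nlinarith [mul_nonneg hcoefpos.le h3]
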